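/- Let f : ℤ → ℤ be the finitely supported function with support exactly {0, 1} and f(0) ≠ f(1). Then the element (f, 3) of the lamplighter group ℤ ≀ ℤ is not a product of 2 palindromes over the standard generators {a, t}. -/

import Mathlib

/-- A palindromic word over `X`: a finite list of elements of `X ∪ X⁻¹`
that reads the same forwards and backwards. -/
def IsPalindromicWord {G : Type*} [Group G] (X : Set G) (w : List G) : Prop :=
  (∀ g ∈ w, g ∈ X ∨ g⁻¹ ∈ X) ∧ w.reverse = w

/-- `g` is a product (in order) of the evaluations of `n` palindromic words over `X`. -/
def IsProdOfPalindromes {G : Type*} [Group G] (X : Set G) (n : ℕ) (g : G) : Prop :=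
  ∃ ws : List (List G), ws.length = n ∧ (∀ w ∈ ws, IsPalindromicWord X w) ∧
    (ws.map List.prod).prod = g

/-- The shift automorphism of `⨁_ℤ ℤ` (written multiplicatively): `(n • f) x = f (x - n)`. -/
noncomputable def lampShiftAut (n : ℤ) : Multiplicative (ℤ →₀ ℤ) ≃* Multiplicative (ℤ →₀ ℤ) :=
  AddEquiv.toMultiplicative (Finsupp.domCongr (Equiv.addRight n))

lemma lampShiftAut_apply (n : ℤ) (f : Multiplicative (ℤ →₀ ℤ)) (x : ℤ) :
    Multiplicative.toAdd (lampShiftAut n f) x = Multiplicative.toAdd f (x - n) := by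
  simp [lampShiftAut, Finsupp.domCongr_apply, sub_eq_add_neg]

/-- `ℤ` acting on `⨁_ℤ ℤ` by shifts. -/
noncomputable def lampShift : Multiplicative ℤ →* MulAut (Multiplicative (ℤ →₀ ℤ)) where
  toFun n := lampShiftAut n.toAdd
  map_one' := by
    ext1 f
    apply (Multiplicative.toAdd).injective
    ext x
    rw [MulAut.one_apply, lampShiftAut_apply]
    norm_num
  map_mul' m n := by
    ext1 f
    apply (Multiplicative.toAdd).injective
    ext x
    rw [MulAut.mul_apply, lampShiftAut_apply, lampShiftAut_apply, lampShiftAut_apply,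
      toAdd_mul]
    ring_nf

/-- The lamplighter group `ℤ ≀ ℤ = (⨁_ℤ ℤ) ⋊ ℤ`. -/
abbrev Lamplighter := Multiplicative (ℤ →₀ ℤ) ⋊[lampShift] Multiplicative ℤ

/-- The standard generator `a = (Δ₁, 0)` of `ℤ ≀ ℤ`. -/
noncomputable def genA : Lamplighter := ⟨Multiplicative.ofAdd (Finsupp.single 0 1), 1⟩

/-- The standard generator `t = (0, 1)` of `ℤ ≀ ℤ`. -/
noncomputable def genT : Lamplighter := ⟨1, Multiplicative.ofAdd 1⟩

open Multiplicative Finsupp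

lemma lampShift_apply' (n : Multiplicative ℤ) (f : Multiplicative (ℤ →₀ ℤ)) (x : ℤ) :
    toAdd (lampShift n f) x = toAdd f (x - toAdd n) :=
  lampShiftAut_apply _ _ _

/-- The reversal anti-automorphism of the lamplighter group, fixing `genA` and `genT`. -/
noncomputable def lampStar (g : Lamplighter) : Lamplighter :=
  ⟨Multiplicative.ofAdd (Finsupp.equivMapDomain (Equiv.subLeft (Multiplicative.toAdd g.right))
      (Multiplicative.toAdd g.left)), g.right⟩

@[simp] lemma lampStar_right (g : Lamplighter) : (lampStar g).right = g.right := rfl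

lemma lampStar_left_apply (g : Lamplighter) (x : ℤ) :
    toAdd (lampStar g).left x = toAdd g.left (toAdd g.right - x) := by
  simp [lampStar, Finsupp.equivMapDomain_apply, Equiv.subLeft, sub_eq_neg_add]

lemma lampStar_mul (g h : Lamplighter) : lampStar (g * h) = lampStar h * lampStar g := by
  ext1
  · apply Multiplicative.toAdd.injective
    ext x
    rw [lampStar_left_apply, SemidirectProduct.mul_left, SemidirectProduct.mul_right,
      toAdd_mul, toAdd_mul, Finsupp.add_apply, lampShift_apply',
      SemidirectProduct.mul_left, toAdd_mul, Finsupp.add_apply, lampShift_apply',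
      lampStar_left_apply, lampStar_left_apply, lampStar_right]
    rw [add_comm]
    congr 2 <;> ring
  · show (g * h).right = (lampStar h * lampStar g).right
    rw [SemidirectProduct.mul_right, SemidirectProduct.mul_right, lampStar_right,
      lampStar_right, mul_comm]

lemma lampStar_one : lampStar 1 = 1 := by
  ext1
  · apply Multiplicative.toAdd.injective
    ext x
    rw [lampStar_left_apply]
    simp
  · rfl

lemma lampStar_inv (g : Lamplighter) : lampStar g⁻¹ = (lampStar g)⁻¹ := by
  have h : lampStar g⁻¹ * lampStar g = 1 := by
    rw [← lampStar_mul, mul_inv_cancel, lampStar_one]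
  exact eq_inv_of_mul_eq_one_left h

lemma lampStar_genA : lampStar genA = genA := by
  ext1
  · apply Multiplicative.toAdd.injective
    ext x
    rw [lampStar_left_apply]
    show (Finsupp.single 0 1 : ℤ →₀ ℤ) (toAdd (1 : Multiplicative ℤ) - x)
        = (Finsupp.single 0 1 : ℤ →₀ ℤ) x
    have h0 : toAdd (1 : Multiplicative ℤ) - x = -x := by simp
    rw [h0, Finsupp.single_apply, Finsupp.single_apply]
    split_ifs <;> omega
  · rfl

lemma lampStar_genT : lampStar genT = genT := by
  ext1
  · apply Multiplicative.toAdd.injective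
    ext x
    rw [lampStar_left_apply]
    simp [genT]
  · rfl

lemma lampStar_list_prod (w : List Lamplighter) :
    lampStar w.prod = (w.reverse.map lampStar).prod := by
  induction w with
  | nil => simpa using lampStar_one
  | cons a s ih => simp [lampStar_mul, ih]

lemma lampStar_fixed_of_palindrome (w : List Lamplighter)
    (hw : IsPalindromicWord {genA, genT} w) : lampStar w.prod = w.prod := by
  obtain ⟨hmem, hrev⟩ := hw
  have hmap : w.map lampStar = w := by
    conv_rhs => rw [← List.map_id w]
    apply List.map_congr_left
    intro g hg
    rcases hmem g hg with h | h <;> rcases h with h | h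
    · rw [h, lampStar_genA]; rfl
    · rw [Set.mem_singleton_iff] at h; rw [h, lampStar_genT]; rfl
    · have : g = genA⁻¹ := by rw [← h, inv_inv]
      rw [this, lampStar_inv, lampStar_genA]; rfl
    · rw [Set.mem_singleton_iff] at h
      have : g = genT⁻¹ := by rw [← h, inv_inv]
      rw [this, lampStar_inv, lampStar_genT]; rfl
  rw [lampStar_list_prod, hrev, hmap]

/-- The mod-3 lamp-count invariant. -/
noncomputable def Tm (φ : ℤ →₀ ℤ) : ZMod 3 →₀ ℤ :=
  Finsupp.mapDomain (fun x : ℤ => (x : ZMod 3)) φ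

lemma Tm_symm {φ : ℤ →₀ ℤ} {m : ℤ} (h : ∀ x, φ (m - x) = φ x) (c : ZMod 3) :
    Tm φ ((m : ZMod 3) - c) = Tm φ c := by
  have hinjZ : Function.Injective (fun x : ℤ => m - x) := fun a b hab => by
    simp only at hab; omega
  have hφ' : Finsupp.mapDomain (fun x : ℤ => m - x) φ = φ := by
    ext y
    have h1 : y = m - (m - y) := by ring
    conv_lhs => rw [h1]
    rw [Finsupp.mapDomain_apply hinjZ]
    exact h y
  have hcomp : (fun x : ℤ => (x : ZMod 3)) ∘ (fun x : ℤ => m - x)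
      = (fun c : ZMod 3 => (m : ZMod 3) - c) ∘ (fun x : ℤ => (x : ZMod 3)) := by
    funext x
    show ((m - x : ℤ) : ZMod 3) = (m : ZMod 3) - (x : ZMod 3)
    push_cast
    ring
  have hinj : Function.Injective (fun c : ZMod 3 => (m : ZMod 3) - c) :=
    fun a b hab => by simpa using sub_right_injective hab
  have key : Finsupp.mapDomain (fun c : ZMod 3 => (m : ZMod 3) - c) (Tm φ) = Tm φ := by
    conv_rhs => rw [← hφ']
    rw [Tm, Tm, ← Finsupp.mapDomain_comp, ← Finsupp.mapDomain_comp, hcomp]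
  conv_lhs => rw [← key]
  exact Finsupp.mapDomain_apply hinj (Tm φ) c

lemma Tm_shift (ψ : ℤ →₀ ℤ) (m : ℤ) (c : ZMod 3) :
    Tm (Finsupp.mapDomain (fun x : ℤ => x + m) ψ) c = Tm ψ (c - (m : ZMod 3)) := by
  have hcomp : (fun x : ℤ => (x : ZMod 3)) ∘ (fun x : ℤ => x + m)
      = (fun c : ZMod 3 => c + (m : ZMod 3)) ∘ (fun x : ℤ => (x : ZMod 3)) := by
    funext x
    show ((x + m : ℤ) : ZMod 3) = (x : ZMod 3) + (m : ZMod 3)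
    push_cast
    ring
  have hinj : Function.Injective (fun c : ZMod 3 => c + (m : ZMod 3)) :=
    fun a b hab => by simpa using hab
  have key : Tm (Finsupp.mapDomain (fun x : ℤ => x + m) ψ)
      = Finsupp.mapDomain (fun c : ZMod 3 => c + (m : ZMod 3)) (Tm ψ) := by
    rw [Tm, Tm, ← Finsupp.mapDomain_comp, ← Finsupp.mapDomain_comp, hcomp]
  rw [key]
  have h2 := Finsupp.mapDomain_apply hinj (Tm ψ) (c - (m : ZMod 3))
  simpa using h2

theorem not_prod_of_two_palindromes (f : ℤ →₀ ℤ)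
    (hsupp : f.support = {0, 1}) (hne : f 0 ≠ f 1) :
    ¬ IsProdOfPalindromes {genA, genT} 2
      (⟨Multiplicative.ofAdd f, Multiplicative.ofAdd 3⟩ : Lamplighter) := by
  rintro ⟨ws, hlen, hpal, hprod⟩
  obtain ⟨w1, w2, rfl⟩ := List.length_eq_two.mp hlen
  set p := w1.prod with hp
  set q := w2.prod with hq
  have hpq : p * q = (⟨Multiplicative.ofAdd f, Multiplicative.ofAdd 3⟩ : Lamplighter) := by
    simpa using hprod
  have sp : lampStar p = p := lampStar_fixed_of_palindrome w1 (hpal w1 (by simp))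
  have sq : lampStar q = q := lampStar_fixed_of_palindrome w2 (hpal w2 (by simp))
  set φ := toAdd p.left with hφdef
  set m := toAdd p.right with hmdef
  set ψ := toAdd q.left with hψdef
  set k := toAdd q.right with hkdef
  -- symmetry of the two palindromes
  have hφ : ∀ x, φ (m - x) = φ x := by
    intro x
    rw [← lampStar_left_apply]
    rw [sp]
  have hψ : ∀ x, ψ (k - x) = ψ x := by
    intro x
    rw [← lampStar_left_apply]
    rw [sq]
  -- the product decomposition
  have hmk : m + k = 3 := by
    have := congrArg (fun z : Lamplighter => toAdd z.right) hpq
    simpa [SemidirectProduct.mul_right] using this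
  have hshift : ∀ x : ℤ, toAdd (lampShift p.right q.left) x = ψ (x - m) :=
    fun x => lampShift_apply' p.right q.left x
  have hmd : Finsupp.mapDomain (fun x : ℤ => x + m) ψ = toAdd (lampShift p.right q.left) := by
    ext y
    have h1 : y = (y - m) + m := by ring
    conv_lhs => rw [h1]
    rw [Finsupp.mapDomain_apply (fun a b hab => by simpa using hab :
      Function.Injective (fun x : ℤ => x + m)) ψ]
    rw [hshift y]
  have hleft : φ + Finsupp.mapDomain (fun x : ℤ => x + m) ψ = f := by
    have h := congrArg (fun z : Lamplighter => toAdd z.left) hpq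
    simp only [SemidirectProduct.mul_left, toAdd_mul, toAdd_ofAdd] at h
    rw [← h, hmd]
  -- pass to ZMod 3
  set A := Tm φ with hA
  set B := Tm ψ with hB
  set F := Tm f with hFdef
  set mb : ZMod 3 := (m : ZMod 3) with hmb
  have hkb : (k : ZMod 3) = -mb := by
    have : ((m + k : ℤ) : ZMod 3) = ((3 : ℤ) : ZMod 3) := by rw [hmk]
    push_cast at this
    rw [hmb]
    have h3 : ((3 : ℤ) : ZMod 3) = 0 := by decide
    push_cast at h3
    rw [h3] at this
    linear_combination this
  have hFeq : ∀ c, F c = A c + B (c - mb) := by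
    intro c
    rw [hFdef, ← hleft, Tm]
    rw [Finsupp.mapDomain_add]
    rw [Finsupp.add_apply]
    congr 1
    exact Tm_shift ψ m c
  have hAsym : ∀ c, A (mb - c) = A c := fun c => Tm_symm hφ c
  have hBsym : ∀ c, B ((k : ZMod 3) - c) = B c := fun c => Tm_symm hψ c
  -- the derived symmetry of F
  have hFsym : ∀ c, F (mb - c) = F c := by
    intro c
    rw [hFeq, hFeq, hAsym]
    congr 1
    have h1 : mb - c - mb = -c := by ring
    rw [h1]
    have h2 : -c = (k : ZMod 3) - (c - mb) := by rw [hkb]; ring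
    rw [h2, hBsym]
  -- compute F explicitly
  have hf0 : f 0 ≠ 0 := by
    rw [← Finsupp.mem_support_iff, hsupp]; simp
  have hf1 : f 1 ≠ 0 := by
    rw [← Finsupp.mem_support_iff, hsupp]; simp
  have hf01 : f = Finsupp.single 0 (f 0) + Finsupp.single 1 (f 1) := by
    ext x
    rw [Finsupp.add_apply, Finsupp.single_apply, Finsupp.single_apply]
    rcases eq_or_ne x 0 with rfl | h0
    · rw [if_pos rfl, if_neg (by omega)]; ring
    rcases eq_or_ne x 1 with rfl | h1
    · rw [if_neg (by omega), if_pos rfl]; ring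
    have hx : x ∉ f.support := by rw [hsupp]; simp [h0, h1]
    rw [Finsupp.notMem_support_iff] at hx
    rw [hx, if_neg (by omega), if_neg (by omega)]; ring
  have hFval : F = Finsupp.single (0 : ZMod 3) (f 0) + Finsupp.single (1 : ZMod 3) (f 1) := by
    have c0 : (((0 : ℤ) : ZMod 3)) = (0 : ZMod 3) := by decide
    have c1 : (((1 : ℤ) : ZMod 3)) = (1 : ZMod 3) := by decide
    rw [hFdef]
    conv_lhs => rw [hf01, Tm, Finsupp.mapDomain_add, Finsupp.mapDomain_single,
      Finsupp.mapDomain_single, c0, c1]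
  have hF0 : F 0 = f 0 := by
    rw [hFval, Finsupp.add_apply, Finsupp.single_apply, Finsupp.single_apply,
      if_pos rfl, if_neg (by decide)]
    ring
  have hF1 : F 1 = f 1 := by
    rw [hFval, Finsupp.add_apply, Finsupp.single_apply, Finsupp.single_apply,
      if_neg (by decide), if_pos rfl]
    ring
  have hF2 : F 2 = 0 := by
    rw [hFval, Finsupp.add_apply, Finsupp.single_apply, Finsupp.single_apply,
      if_neg (by decide), if_neg (by decide)]
    ring
  -- case analysis on m mod 3
  have hcases : ∀ z : ZMod 3, z = 0 ∨ z = 1 ∨ z = 2 := by decide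
  rcases hcases mb with h | h | h
  · have hc := hFsym 1
    rw [h] at hc
    have he : (0 : ZMod 3) - 1 = 2 := by decide
    rw [he, hF1, hF2] at hc
    exact hf1 hc.symm
  · have hc := hFsym 0
    rw [h] at hc
    have he : (1 : ZMod 3) - 0 = 1 := by decide
    rw [he, hF0, hF1] at hc
    exact hne hc.symm
  · have hc := hFsym 0
    rw [h] at hc
    have he : (2 : ZMod 3) - 0 = 2 := by decide
    rw [he, hF0, hF2] at hc
    exact hf0 hc.symm
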